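/- Let Y be compact and f, g continuous. Then for every x ∈ X, the penalized hyper-objective converges pointwise to the hyper-objective as the penalty parameter tends to zero: lim_{σ→0⁺} ψ_σ(x) = ψ(x); equivalently, the right derivative of the value function σ ↦ l(x,σ) at σ = 0⁺ exists and equals ψ(x). -/
import Mathlib


open Set Metric Filter

private lemma exists_sInf_image {E : Type*} [TopologicalSpace E]
    {Y : Set E} (hY : IsCompact Y) (hne : Y.Nonempty)
    {h : E → ℝ} (hc : ContinuousOn h Y) :
    ∃ y ∈ Y, sInf (h '' Y) = h y ∧ ∀ z ∈ Y, h y ≤ h z := by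
  obtain ⟨y, hyY, hmin⟩ := hY.exists_isMinOn hne hc
  refine ⟨y, hyY, ?_, fun z hz => isMinOn_iff.mp hmin z hz⟩
  refine IsLeast.csInf_eq ⟨mem_image_of_mem _ hyY, ?_⟩
  rintro _ ⟨z, hz, rfl⟩
  exact isMinOn_iff.mp hmin z hz

/-- For compact `Y` and continuous `f, g`, the penalized hyper-objective
`ψ_σ(x) = (l(x,σ) - l(x,0))/σ` converges pointwise to the hyper-objective
`ψ(x) = min_{y ∈ T(x,0)} f(x,y)` as `σ → 0⁺`; equivalently, the right derivative of
`σ ↦ l(x,σ)` at `0⁺` exists and equals `ψ(x)`. -/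
theorem stmt0
    (dx dy : ℕ)
    (X : Set (EuclideanSpace ℝ (Fin dx)))
    (Y : Set (EuclideanSpace ℝ (Fin dy)))
    (hXne : X.Nonempty) (hXclosed : IsClosed X) (hXconv : Convex ℝ X)
    (hYne : Y.Nonempty) (hYcomp : IsCompact Y) (hYconv : Convex ℝ Y)
    (f g : EuclideanSpace ℝ (Fin dx) → EuclideanSpace ℝ (Fin dy) → ℝ)
    (hf : Continuous (Function.uncurry f)) (hg : Continuous (Function.uncurry g))
    -- the value function `l(x,σ) = min_{y ∈ Y} (σ f(x,y) + g(x,y))`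
    (l : EuclideanSpace ℝ (Fin dx) → ℝ → ℝ)
    (hl : ∀ x σ, l x σ = sInf ((fun y => σ * f x y + g x y) '' Y))
    -- the lower-level solution set `T(x,σ) = argmin_{y ∈ Y} (σ f(x,y) + g(x,y))`
    (T : EuclideanSpace ℝ (Fin dx) → ℝ → Set (EuclideanSpace ℝ (Fin dy)))
    (hT : ∀ x σ, T x σ = {y ∈ Y | ∀ z ∈ Y, σ * f x y + g x y ≤ σ * f x z + g x z})
    -- the hyper-objective `ψ(x) = min_{y ∈ T(x,0)} f(x,y)`
    (ψ : EuclideanSpace ℝ (Fin dx) → ℝ)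
    (hψ : ∀ x, ψ x = sInf ((fun y => f x y) '' T x 0))
    (x : EuclideanSpace ℝ (Fin dx)) (hx : x ∈ X) :
    Tendsto (fun σ : ℝ => (l x σ - l x 0) / σ) (nhdsWithin 0 (Ioi 0)) (nhds (ψ x)) := by
  have hFc : Continuous (f x) := hf.comp (Continuous.prodMk_right x)
  have hGc : Continuous (g x) := hg.comp (Continuous.prodMk_right x)
  -- minimizer of g x on Y
  obtain ⟨y0, hy0Y, hl0eq, hy0min⟩ := exists_sInf_image hYcomp hYne hGc.continuousOn
  have hl0 : l x 0 = g x y0 := by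
    rw [hl]; simp only [zero_mul, zero_add]; exact hl0eq
  have hl0le : ∀ y ∈ Y, l x 0 ≤ g x y := by
    intro y hy; rw [hl0]; exact hy0min y hy
  -- description of T x 0
  have hT0 : T x 0 = {y ∈ Y | ∀ z ∈ Y, g x y ≤ g x z} := by
    rw [hT]; simp only [zero_mul, zero_add]
  have hT0sub : T x 0 ⊆ Y := by rw [hT0]; exact sep_subset _ _
  have hy0T : y0 ∈ T x 0 := by rw [hT0]; exact ⟨hy0Y, hy0min⟩
  have hT0comp : IsCompact (T x 0) := by
    rw [hT0]
    have hcl : IsClosed {y | ∀ z ∈ Y, g x y ≤ g x z} := by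
      have : {y | ∀ z ∈ Y, g x y ≤ g x z} = ⋂ z ∈ Y, {y | g x y ≤ g x z} := by
        ext y; simp
      rw [this]
      exact isClosed_biInter fun z _ => isClosed_le hGc continuous_const
    exact hYcomp.inter_right hcl
  -- minimizer of f x on T x 0
  obtain ⟨ys, hysT, hψeq, hysmin⟩ :=
    exists_sInf_image hT0comp ⟨y0, hy0T⟩ hFc.continuousOn
  have hψx : ψ x = f x ys := by rw [hψ]; exact hψeq
  have hysY : ys ∈ Y := hT0sub hysT
  have hGys : g x ys = l x 0 := by
    have h1 : g x ys ≤ g x y0 := by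
      rw [hT0] at hysT; exact hysT.2 y0 hy0Y
    have h2 := hl0le ys hysY
    rw [hl0]; exact le_antisymm h1 (by rw [← hl0]; exact h2)
  -- upper bound
  have hub : ∀ σ : ℝ, l x σ ≤ σ * ψ x + l x 0 := by
    intro σ
    rw [hl]
    have hbdd : BddBelow ((fun y => σ * f x y + g x y) '' Y) :=
      (hYcomp.image ((continuous_const.mul hFc).add hGc)).bddBelow
    have h := csInf_le hbdd (mem_image_of_mem (fun y => σ * f x y + g x y) hysY)
    rw [hψx, ← hGys]; exact h
  -- minimizer of f x on Y
  obtain ⟨ym, hymY, -, hymmin⟩ := exists_sInf_image hYcomp hYne hFc.continuousOn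
  have hC : 0 ≤ ψ x - f x ym := by
    have := hymmin ys hysY; rw [hψx]; linarith
  rw [Metric.tendsto_nhdsWithin_nhds]
  intro ε hε
  -- find δ such that near-minimizers of g have f-value above ψ x - ε
  obtain ⟨δ, hδpos, hδ⟩ : ∃ δ > 0, ∀ y ∈ Y, f x y ≤ ψ x - ε → l x 0 + δ ≤ g x y := by
    by_cases hK : ({y ∈ Y | f x y ≤ ψ x - ε}).Nonempty
    · have hKcomp : IsCompact {y ∈ Y | f x y ≤ ψ x - ε} :=
        hYcomp.inter_right (isClosed_le hFc continuous_const)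
      obtain ⟨yk, hykK, -, hykmin⟩ := exists_sInf_image hKcomp hK hGc.continuousOn
      have hgt : l x 0 < g x yk := by
        rcases lt_or_eq_of_le (hl0le yk hykK.1) with h | h
        · exact h
        · exfalso
          have hmem : yk ∈ T x 0 := by
            rw [hT0]
            exact ⟨hykK.1, fun z hz => by rw [← h]; exact hl0le z hz⟩
          have h1 := hysmin yk hmem
          have h2 := hykK.2
          rw [← hψx] at h1
          linarith
      refine ⟨g x yk - l x 0, by linarith, fun y hy hfy => ?_⟩
      have := hykmin y ⟨hy, hfy⟩
      linarith
    · exact ⟨1, one_pos, fun y hy hfy => absurd ⟨y, hy, hfy⟩ hK⟩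
  set C := ψ x - f x ym with hCdef
  refine ⟨δ / (C + 1), by positivity, ?_⟩
  intro σ hσ hdist
  have hσpos : 0 < σ := hσ
  have hσlt : σ < δ / (C + 1) := by
    rw [Real.dist_eq, sub_zero, abs_of_pos hσpos] at hdist
    exact hdist
  -- minimizer at σ
  obtain ⟨yσ, hyσY, hlσeq, hyσmin⟩ :=
    exists_sInf_image hYcomp hYne ((continuous_const.mul hFc).add hGc).continuousOn
  have hlσval : l x σ = σ * f x yσ + g x yσ := by rw [hl]; exact hlσeq
  -- lower bound on f x yσ
  have hflow : ψ x - ε < f x yσ := by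
    by_contra hcon
    push_neg at hcon
    have hgδ := hδ yσ hyσY hcon
    have h1 : σ * f x ym ≤ σ * f x yσ :=
      mul_le_mul_of_nonneg_left (hymmin yσ hyσY) hσpos.le
    have h2 := hub σ
    have hδσ : δ ≤ σ * C := by
      have : σ * f x ym + l x 0 + δ ≤ σ * ψ x + l x 0 := by linarith
      nlinarith
    have hmul : σ * C ≤ (δ / (C + 1)) * C :=
      mul_le_mul_of_nonneg_right hσlt.le hC
    have hcancel : (δ / (C + 1)) * (C + 1) = δ := by
      field_simp
    nlinarith [div_pos hδpos (by linarith : (0:ℝ) < C + 1)]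
  -- the ratio bounds
  have hub' : (l x σ - l x 0) / σ ≤ ψ x := by
    rw [div_le_iff₀ hσpos]
    have := hub σ
    linarith
  have hlb' : ψ x - ε < (l x σ - l x 0) / σ := by
    have hg0 : l x 0 ≤ g x yσ := hl0le yσ hyσY
    have : f x yσ ≤ (l x σ - l x 0) / σ := by
      rw [le_div_iff₀ hσpos]
      rw [hlσval]
      nlinarith
    linarith
  rw [Real.dist_eq, abs_lt]
  constructor <;> linarith
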